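/- The pair ([C̄', H̄']', Ā) is detectable if and only if ŌH ∩ ∏_{i=1}^N C_i^u = {0}, where ŌH is the unobservable subspace of (H̄, Ā) and C_i^u is the undetectable subspace of (C_i, A). -/

import Mathlib

open Matrix Kronecker Polynomial

/-- Block diagonal matrix `C̄ = diag[C_1, …, C_N]` acting on block vectors. -/
def Cbar {N n : ℕ} (m : Fin N → ℕ) (C : ∀ i, Matrix (Fin (m i)) (Fin n) ℝ) :
    Matrix ((i : Fin N) × Fin (m i)) (Fin N × Fin n) ℝ :=
  Matrix.of fun p q => if p.1 = q.1 then C p.1 p.2 q.2 else 0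

namespace DetAux

variable {n N : ℕ}

lemma one_kron_apply (M : Matrix (Fin n) (Fin n) ℝ) (p q : Fin N × Fin n) :
    ((1 : Matrix (Fin N) (Fin N) ℝ) ⊗ₖ M) p q = if p.1 = q.1 then M p.2 q.2 else 0 := by
  simp [Matrix.kroneckerMap_apply, Matrix.one_apply, ite_mul]

lemma mulVec_one_kron (M : Matrix (Fin n) (Fin n) ℝ) (x : Fin N × Fin n → ℝ)
    (i : Fin N) (j : Fin n) :
    ((1 : Matrix (Fin N) (Fin N) ℝ) ⊗ₖ M).mulVec x (i, j)
      = M.mulVec (fun k => x (i, k)) j := by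
  simp [Matrix.mulVec, dotProduct, Fintype.sum_prod_type, Matrix.kroneckerMap_apply,
    Matrix.one_apply, ite_mul, Finset.sum_ite_eq]

lemma mulVec_Cbar (m : Fin N → ℕ) (C : ∀ i, Matrix (Fin (m i)) (Fin n) ℝ)
    (y : Fin N × Fin n → ℝ) (i : Fin N) (a : Fin (m i)) :
    (Cbar m C).mulVec y ⟨i, a⟩ = (C i).mulVec (fun j => y (i, j)) a := by
  simp [Cbar, Matrix.mulVec, dotProduct, Fintype.sum_prod_type, ite_mul]

lemma one_kron_pow (M : Matrix (Fin n) (Fin n) ℝ) (l : ℕ) :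
    ((1 : Matrix (Fin N) (Fin N) ℝ) ⊗ₖ M) ^ l
      = (1 : Matrix (Fin N) (Fin N) ℝ) ⊗ₖ (M ^ l) := by
  induction l with
  | zero => simp [Matrix.one_kronecker_one]
  | succ k ih =>
    rw [pow_succ, pow_succ, ih, ← Matrix.mul_kronecker_mul, Matrix.one_mul]

lemma one_kron_sum {ι : Type*} (s : Finset ι) (f : ι → Matrix (Fin n) (Fin n) ℝ) :
    (1 : Matrix (Fin N) (Fin N) ℝ) ⊗ₖ (∑ k ∈ s, f k) = ∑ k ∈ s, (1 : Matrix (Fin N) (Fin N) ℝ) ⊗ₖ f k := by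
  classical
  induction s using Finset.induction_on with
  | empty => ext ⟨i,j⟩ ⟨i',j'⟩; simp [Matrix.kroneckerMap_apply]
  | insert _ _ hnot ih =>
    rw [Finset.sum_insert hnot, Finset.sum_insert hnot, ← ih]
    ext ⟨i,j⟩ ⟨i',j'⟩
    simp [Matrix.kroneckerMap_apply, mul_add]

lemma one_kron_aeval (M : Matrix (Fin n) (Fin n) ℝ) (p : Polynomial ℝ) :
    aeval ((1 : Matrix (Fin N) (Fin N) ℝ) ⊗ₖ M) p
      = (1 : Matrix (Fin N) (Fin N) ℝ) ⊗ₖ (aeval M p) := by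
  rw [Polynomial.aeval_eq_sum_range' (Nat.lt_succ_self p.natDegree),
      Polynomial.aeval_eq_sum_range' (Nat.lt_succ_self p.natDegree)]
  rw [one_kron_sum]
  refine Finset.sum_congr rfl fun k _ => ?_
  rw [one_kron_pow, Matrix.kronecker_smul]

/-- Linear map `M ↦ (Ci * M) *ᵥ v`. -/
def matMulVec {mi : ℕ} (Ci : Matrix (Fin mi) (Fin n) ℝ) (v : Fin n → ℝ) :
    Matrix (Fin n) (Fin n) ℝ →ₗ[ℝ] (Fin mi → ℝ) where
  toFun M := (Ci * M).mulVec v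
  map_add' M M' := by simp [Matrix.mul_add, Matrix.add_mulVec]
  map_smul' c M := by simp [Matrix.mul_smul, Matrix.smul_mulVec]

lemma all_pow_zero {mi : ℕ} (A : Matrix (Fin n) (Fin n) ℝ)
    (Ci : Matrix (Fin mi) (Fin n) ℝ) (v : Fin n → ℝ)
    (h : ∀ l < n, (Ci * A ^ l).mulVec v = 0) (l : ℕ) :
    (Ci * A ^ l).mulVec v = 0 := by
  rcases Nat.eq_zero_or_pos n with hn | hn
  · subst hn
    ext a
    simp [Matrix.mulVec, dotProduct]
  · set r := (Polynomial.X ^ l : Polynomial ℝ) %ₘ A.charpoly with hr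
    have hAl : A ^ l = aeval A r := by
      have hdiv := Polynomial.modByMonic_add_div (Polynomial.X ^ l : Polynomial ℝ)
        A.charpoly
      have := congrArg (aeval A) hdiv
      simpa [Matrix.aeval_self_charpoly] using this.symm
    have hdeg : r.natDegree < n := by
      by_cases h0 : r = 0
      · simpa [h0] using hn
      · rw [Polynomial.natDegree_lt_iff_degree_lt h0]
        have := Polynomial.degree_modByMonic_lt (Polynomial.X ^ l : Polynomial ℝ)
          A.charpoly_monic
        rwa [Matrix.charpoly_degree_eq_dim, Fintype.card_fin] at this
    rw [hAl, Polynomial.aeval_eq_sum_range' hdeg]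
    show matMulVec Ci v (∑ k ∈ Finset.range n, r.coeff k • A ^ k) = 0
    rw [map_sum]
    refine Finset.sum_eq_zero fun k hk => ?_
    rw [LinearMap.map_smul,
      show matMulVec Ci v (A ^ k) = 0 from h k (Finset.mem_range.mp hk), smul_zero]

end DetAux

theorem detectable_iff_unobs_inter_prod_undet {n N : ℕ} (hN : 0 < N)
    (A : Matrix (Fin n) (Fin n) ℝ)
    (m : Fin N → ℕ) (C : ∀ i, Matrix (Fin (m i)) (Fin n) ℝ)
    {q : ℕ} (Hbar : Matrix (Fin q) (Fin N × Fin n) ℝ)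
    (aminus aplus : Polynomial ℝ)
    (hmonicm : aminus.Monic) (hmonicp : aplus.Monic)
    (hfact : minpoly ℝ A = aminus * aplus)
    (hminus : ∀ μ ∈ (aminus.map (algebraMap ℝ ℂ)).roots, μ.re < 0)
    (hplus : ∀ μ ∈ (aplus.map (algebraMap ℝ ℂ)).roots, 0 ≤ μ.re) :
    (∀ x : Fin N × Fin n → ℝ,
        (∀ l < n * N,
            (Cbar m C * ((1 : Matrix (Fin N) (Fin N) ℝ) ⊗ₖ A) ^ l).mulVec x = 0 ∧
            (Hbar * ((1 : Matrix (Fin N) (Fin N) ℝ) ⊗ₖ A) ^ l).mulVec x = 0) →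
        (aeval ((1 : Matrix (Fin N) (Fin N) ℝ) ⊗ₖ A) aplus).mulVec x = 0 →
        x = 0) ↔
      (∀ x : Fin N × Fin n → ℝ,
        (∀ l < n * N,
            (Hbar * ((1 : Matrix (Fin N) (Fin N) ℝ) ⊗ₖ A) ^ l).mulVec x = 0) →
        (∀ i : Fin N,
            (∀ l < n, (C i * A ^ l).mulVec (fun j => x (i, j)) = 0) ∧
            (aeval A aplus).mulVec (fun j => x (i, j)) = 0) →
        x = 0) := by
  constructor
  · intro hL x hH hblk
    refine hL x (fun l hl => ⟨?_, hH l hl⟩) ?_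
    · -- Cbar condition for all l
      funext p
      obtain ⟨i, a⟩ := p
      rw [← Matrix.mulVec_mulVec, DetAux.one_kron_pow, DetAux.mulVec_Cbar]
      have hall := DetAux.all_pow_zero A (C i) (fun j => x (i, j)) (hblk i).1 l
      have : (fun j => ((1 : Matrix (Fin N) (Fin N) ℝ) ⊗ₖ (A ^ l)).mulVec x (i, j))
          = (A ^ l).mulVec (fun k => x (i, k)) := by
        funext j; exact DetAux.mulVec_one_kron _ _ _ _
      rw [this, Matrix.mulVec_mulVec, hall]
      rfl
    · funext p
      obtain ⟨i, j⟩ := p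
      rw [DetAux.one_kron_aeval, DetAux.mulVec_one_kron]
      have := (hblk i).2
      rw [this]
      rfl
  · intro hR x hboth hplusx
    refine hR x (fun l hl => (hboth l hl).2) (fun i => ⟨?_, ?_⟩)
    · intro l hl
      have hl' : l < n * N := lt_of_lt_of_le hl (Nat.le_mul_of_pos_right n hN)
      have h1 := (hboth l hl').1
      funext a
      have := congrFun h1 ⟨i, a⟩
      rw [← Matrix.mulVec_mulVec, DetAux.one_kron_pow, DetAux.mulVec_Cbar] at this
      have heq : (fun j => ((1 : Matrix (Fin N) (Fin N) ℝ) ⊗ₖ (A ^ l)).mulVec x (i, j))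
          = (A ^ l).mulVec (fun k => x (i, k)) := by
        funext j; exact DetAux.mulVec_one_kron _ _ _ _
      rw [heq, Matrix.mulVec_mulVec] at this
      exact this
    · funext j
      have := congrFun hplusx (i, j)
      rw [DetAux.one_kron_aeval, DetAux.mulVec_one_kron] at this
      exact this
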